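/- Let V be a finite-dimensional vector space, and let W_1 ⊆ W_2 ⊆ V be nested subspaces. Any basis A' of W_1 can be extended first to a basis A'' of W_2 and then to a basis of V; consequently, for filtered cycle spaces, a basis of Z_p(L) ∩ B_p(K) starting with a basis of B_p(L) can be extended to a consistent basis A_L of Z_p(L) and further to a consistent basis A_K of Z_p(K) such that every element of A_L is an element of A_K and the homology map i_* : H_p(L) → H_p(K) is diagonal in these bases. -/

import Mathlib

/-- An abstract simplicial complex on vertex type `V`: a collection of finite
subsets of `V` (the simplices) closed under taking subsets. -/
structure SimpComplex (V : Type) [DecidableEq V] where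
  faces : Set (Finset V)
  down_closed : ∀ s ∈ faces, ∀ t ⊆ s, t ∈ faces

variable {V : Type} [DecidableEq V]

/-- The `p`-simplices of `K` (sets of cardinality `p+1`). -/
def SimpComplex.simplices (K : SimpComplex V) (p : ℕ) : Type :=
  {s : Finset V // s ∈ K.faces ∧ s.card = p + 1}

/-- The `p`-th chain group of `K` with `ℤ/2` coefficients. -/
def SimpComplex.Chain (K : SimpComplex V) (p : ℕ) : Type :=
  K.simplices p →₀ ZMod 2

noncomputable instance (K : SimpComplex V) (p : ℕ) : AddCommGroup (K.Chain p) :=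
  inferInstanceAs (AddCommGroup ((K.simplices p) →₀ ZMod 2))

noncomputable instance (K : SimpComplex V) (p : ℕ) : Module (ZMod 2) (K.Chain p) :=
  inferInstanceAs (Module (ZMod 2) ((K.simplices p) →₀ ZMod 2))

/-- The sum of the facets ((p)-dimensional faces) of a `(p+1)`-simplex. -/
noncomputable def SimpComplex.facetSum (K : SimpComplex V) (p : ℕ)
    (σ : K.simplices (p + 1)) : K.Chain p :=
  ∑ v ∈ σ.1.attach,
    Finsupp.single
      ⟨σ.1.erase v.1,
        K.down_closed _ σ.2.1 _ (Finset.erase_subset _ _),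
        by rw [Finset.card_erase_of_mem v.2, σ.2.2]; rfl⟩ (1 : ZMod 2)

/-- The boundary map `∂_p : C_p(K) → C_{p-1}(K)`, extended linearly from
simplices; `∂_0` is the zero map. -/
noncomputable def SimpComplex.boundary (K : SimpComplex V) :
    ∀ p : ℕ, K.Chain p →ₗ[ZMod 2] K.Chain (p - 1)
  | 0 => 0
  | (q + 1) => Finsupp.linearCombination (ZMod 2) (K.facetSum q)


/-- The space of `p`-cycles `Z_p(K) = ker ∂_p`. -/
noncomputable def SimpComplex.cycles (K : SimpComplex V) (p : ℕ) :
    Submodule (ZMod 2) (K.Chain p) :=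
  LinearMap.ker (K.boundary p)

/-- The space of `p`-boundaries `B_p(K) = im ∂_{p+1}`. -/
noncomputable def SimpComplex.boundaries (K : SimpComplex V) (p : ℕ) :
    Submodule (ZMod 2) (K.Chain p) :=
  LinearMap.range (K.boundary (p + 1))

/-- The cycles of the subcomplex with faces `S`, viewed inside `C_p(K)`:
chains supported on `S` with vanishing boundary. -/
noncomputable def SimpComplex.cyclesOf (K : SimpComplex V) (S : Set (Finset V))
    (p : ℕ) : Submodule (ZMod 2) (K.Chain p) :=
  Finsupp.supported (ZMod 2) (ZMod 2) {σ : K.simplices p | σ.1 ∈ S} ⊓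
    LinearMap.ker (K.boundary p)

/-- The boundaries of the subcomplex with faces `S`, viewed inside `C_p(K)`:
boundaries of `(p+1)`-chains supported on `S`. -/
noncomputable def SimpComplex.boundariesOf (K : SimpComplex V)
    (S : Set (Finset V)) (p : ℕ) : Submodule (ZMod 2) (K.Chain p) :=
  (Finsupp.supported (ZMod 2) (ZMod 2)
    {τ : K.simplices (p + 1) | τ.1 ∈ S}).map (K.boundary (p + 1))


/-! ### Auxiliary lemmas -/

section Compat
variable {K X : Type} [Field K] [AddCommGroup X] [Module K X] {s t : Set X}

noncomputable def LinearIndependent.extend (hs : LinearIndependent K ((↑) : s → X))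
    (hst : s ⊆ t) : Set X :=
  LinearIndepOn.extend (K := K) (v := id) (s := s) hs hst

theorem LinearIndependent.extend_subset (hs : LinearIndependent K ((↑) : s → X))
    (hst : s ⊆ t) : hs.extend hst ⊆ t :=
  LinearIndepOn.extend_subset (K := K) (v := id) (s := s) hs hst

theorem LinearIndependent.subset_extend (hs : LinearIndependent K ((↑) : s → X))
    (hst : s ⊆ t) : s ⊆ hs.extend hst :=
  LinearIndepOn.subset_extend (K := K) (v := id) (s := s) hs hst

theorem LinearIndependent.subset_span_extend (hs : LinearIndependent K ((↑) : s → X))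
    (hst : s ⊆ t) : t ⊆ Submodule.span K (hs.extend hst) :=
  LinearIndepOn.subset_span_extend (K := K) (s := s) hs hst

theorem LinearIndependent.linearIndependent_extend (hs : LinearIndependent K ((↑) : s → X))
    (hst : s ⊆ t) : LinearIndependent K ((↑) : hs.extend hst → X) :=
  LinearIndepOn.linearIndepOn_extend (K := K) (v := id) (s := s) hs hst

theorem LinearIndependent.mono (hs : LinearIndependent K ((↑) : s → X))
    (hts : t ⊆ s) : LinearIndependent K ((↑) : t → X) :=
  LinearIndepOn.mono (R := K) (v := id) (s := s) hs hts

theorem LinearIndependent.union (hs : LinearIndependent K ((↑) : s → X))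
    (ht : LinearIndependent K ((↑) : t → X))
    (hst : Disjoint (Submodule.span K s) (Submodule.span K t)) :
    LinearIndependent K ((↑) : ↥(s ∪ t) → X) :=
  LinearIndepOn.id_union (R := K) (s := s) (t := t) hs ht hst

end Compat

/-- The summand for a pair of vertices removed from a `(q+2)`-simplex. -/
noncomputable def gpair (K : SimpComplex V) (q : ℕ) (σ : K.simplices (q + 2)) :
    V × V → K.Chain q := fun x =>
  if h : x.1 ∈ σ.1 ∧ x.2 ∈ σ.1.erase x.1 then
    Finsupp.single
      ⟨(σ.1.erase x.1).erase x.2,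
        K.down_closed _ σ.2.1 _ ((Finset.erase_subset _ _).trans (Finset.erase_subset _ _)),
        by rw [Finset.card_erase_of_mem h.2, Finset.card_erase_of_mem h.1, σ.2.2]; omega⟩
      (1 : ZMod 2)
  else 0

lemma gpair_symm (K : SimpComplex V) (q : ℕ) (σ : K.simplices (q + 2)) (a b : V) :
    gpair K q σ (a, b) = gpair K q σ (b, a) := by
  unfold gpair
  by_cases h : a ∈ σ.1 ∧ b ∈ σ.1 ∧ a ≠ b
  · erw [dif_pos, dif_pos]
    · congr 1
      exact Subtype.ext Finset.erase_right_comm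
    · exact ⟨h.2.1, Finset.mem_erase.2 ⟨h.2.2, h.1⟩⟩
    · exact ⟨h.1, Finset.mem_erase.2 ⟨Ne.symm h.2.2, h.2.1⟩⟩
  · erw [dif_neg, dif_neg]
    · intro hc
      rcases Finset.mem_erase.1 hc.2 with ⟨hne, hb⟩
      exact h ⟨hb, hc.1, hne⟩
    · intro hc
      rcases Finset.mem_erase.1 hc.2 with ⟨hne, hb⟩
      exact h ⟨hc.1, hb, Ne.symm hne⟩

lemma boundary_facetSum (K : SimpComplex V) (q : ℕ) (σ : K.simplices (q + 2)) :
    K.boundary (q + 1) (K.facetSum (q + 1) σ) = 0 := by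
  show Finsupp.linearCombination (ZMod 2) (K.facetSum q) (K.facetSum (q + 1) σ) = 0
  erw [SimpComplex.facetSum, map_sum]
  have step1 : ∀ v : {x // x ∈ σ.1},
      Finsupp.linearCombination (ZMod 2) (K.facetSum q)
        (Finsupp.single ⟨σ.1.erase v.1,
          K.down_closed _ σ.2.1 _ (Finset.erase_subset _ _),
          by rw [Finset.card_erase_of_mem v.2, σ.2.2]; rfl⟩ (1 : ZMod 2))
      = ∑ w ∈ σ.1.erase v.1, gpair K q σ (v.1, w) := by
    intro v
    erw [Finsupp.linearCombination_single, one_smul, SimpComplex.facetSum]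
    rw [← Finset.sum_attach (σ.1.erase v.1) (fun w => gpair K q σ (v.1, w))]
    refine Finset.sum_congr rfl fun w _ => ?_
    erw [gpair, dif_pos (show v.1 ∈ σ.1 ∧ w.1 ∈ σ.1.erase v.1 from ⟨v.2, w.2⟩)]
  rw [Finset.sum_congr rfl fun v _ => step1 v]
  rw [Finset.sum_attach σ.1 (fun v => ∑ w ∈ σ.1.erase v, gpair K q σ (v, w))]
  have : ∑ v ∈ σ.1, ∑ w ∈ σ.1.erase v, gpair K q σ (v, w)
      = ∑ p ∈ (σ.1 ×ˢ σ.1).filter (fun p => p.1 ≠ p.2), gpair K q σ p := by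
    rw [Finset.sum_filter, Finset.sum_product]
    refine Finset.sum_congr rfl fun v _ => ?_
    rw [← Finset.sum_filter]
    refine Finset.sum_congr ?_ fun w _ => rfl
    rw [← Finset.filter_ne' σ.1 v]
    exact Finset.filter_congr fun w _ => by simp [ne_comm]
  rw [this]
  refine Finset.sum_involution (fun p _ => p.swap) ?_ ?_ ?_ ?_
  · intro p _
    show gpair K q σ p + gpair K q σ p.swap = 0
    have hsymm : gpair K q σ p.swap = gpair K q σ p := by
      rw [show p.swap = (p.2, p.1) from rfl, gpair_symm, Prod.mk.eta]
    rw [hsymm, ← two_smul (ZMod 2), show (2 : ZMod 2) = 0 from rfl, zero_smul]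
  · intro p hp _
    simp only [Finset.mem_filter] at hp
    intro hc
    exact hp.2 (congrArg Prod.fst hc).symm
  · intro p hp
    simp only [Finset.mem_filter, Finset.mem_product] at hp ⊢
    exact ⟨⟨hp.1.2, hp.1.1⟩, Ne.symm hp.2⟩
  · intro p _; rfl

lemma boundaries_le_cycles (K : SimpComplex V) (p : ℕ) :
    K.boundaries p ≤ K.cycles p := by
  rintro x ⟨c, rfl⟩
  show K.boundary p (K.boundary (p + 1) c) = 0
  cases p with
  | zero => rfl
  | succ q =>
    show K.boundary (q + 1)
      (Finsupp.linearCombination (ZMod 2) (K.facetSum (q + 1)) c) = 0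
    erw [Finsupp.linearCombination_apply (v := K.facetSum (q + 1)) (l := c), Finsupp.sum, map_sum (K.boundary (q + 1))]
    refine Finset.sum_eq_zero fun σ _ => ?_
    rw [map_smul, boundary_facetSum, smul_zero]

/-- Part (1) as a standalone lemma (no finite-dimensionality needed). -/
lemma basis_double_extension (𝕜 : Type) [Field 𝕜] (X : Type) [AddCommGroup X]
    [Module 𝕜 X] (W1 W2 : Submodule 𝕜 X) (hW : W1 ≤ W2)
    (s : Set X) (hs : LinearIndependent 𝕜 ((↑) : s → X))
    (hspan : Submodule.span 𝕜 s = W1) :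
    ∃ t u : Set X, s ⊆ t ∧ t ⊆ u ∧
      LinearIndependent 𝕜 ((↑) : u → X) ∧
      Submodule.span 𝕜 t = W2 ∧ Submodule.span 𝕜 u = ⊤ := by
  have hsW2 : s ⊆ ↑W2 := fun x hx => hW (hspan ▸ Submodule.subset_span hx)
  set t := hs.extend hsW2 with ht_def
  have ht_ind := hs.linearIndependent_extend hsW2
  have ht_span : Submodule.span 𝕜 t = W2 := by
    refine le_antisymm (Submodule.span_le.2 (hs.extend_subset hsW2)) ?_
    exact fun x hx => hs.subset_span_extend hsW2 hx
  set u := ht_ind.extend (Set.subset_univ t) with hu_def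
  refine ⟨t, u, hs.subset_extend hsW2, ht_ind.subset_extend _,
    ht_ind.linearIndependent_extend _, ht_span, ?_⟩
  refine le_antisymm le_top fun x _ => ?_
  exact ht_ind.subset_span_extend (Set.subset_univ t) (Set.mem_univ x)

/-- (1) In a finite-dimensional vector space `V`, for nested subspaces
`W_1 ⊆ W_2 ⊆ V`, any basis of `W_1` can be extended first to a basis of `W_2`
and then to a basis of `V`.  (2) Consequently, for a subcomplex `L ⊆ K` with
`ℤ/2` coefficients, any basis of `Z_p(L) ∩ B_p(K)` starting with a basis of
`B_p(L)` can be extended to a consistent basis `A_L` of `Z_p(L)` and further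
to a consistent basis `A_K` of `Z_p(K)` with `A_L ⊆ A_K`, so that the
homology map `i_* : H_p(L) → H_p(K)` is diagonal in these bases: each basis
element of `A_L` is sent either into `B_p(K)` (i.e. its class maps to zero) or
to a basis element of `A_K` not in `B_p(K)` (a basis class of `H_p(K)`). -/
theorem basis_extension_and_diagonal_homology_map :
    (∀ (𝕜 : Type) [Field 𝕜] (X : Type) [AddCommGroup X] [Module 𝕜 X]
      [FiniteDimensional 𝕜 X] (W1 W2 : Submodule 𝕜 X), W1 ≤ W2 →
      ∀ s : Set X, LinearIndependent 𝕜 ((↑) : s → X) →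
        Submodule.span 𝕜 s = W1 →
        ∃ t u : Set X, s ⊆ t ∧ t ⊆ u ∧
          LinearIndependent 𝕜 ((↑) : u → X) ∧
          Submodule.span 𝕜 t = W2 ∧ Submodule.span 𝕜 u = ⊤) ∧
    (∀ (Vt : Type) [DecidableEq Vt] (L K : SimpComplex Vt),
      L.faces ⊆ K.faces → ∀ p : ℕ,
      ∀ s1 s2 : Set (K.Chain p), s1 ⊆ s2 →
        LinearIndependent (ZMod 2) ((↑) : s2 → K.Chain p) →
        Submodule.span (ZMod 2) s1 = K.boundariesOf L.faces p →
        Submodule.span (ZMod 2) s2 = K.cyclesOf L.faces p ⊓ K.boundaries p →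
        ∃ sL sK : Set (K.Chain p), s2 ⊆ sL ∧ sL ⊆ sK ∧
          LinearIndependent (ZMod 2) ((↑) : sK → K.Chain p) ∧
          Submodule.span (ZMod 2) sL = K.cyclesOf L.faces p ∧
          Submodule.span (ZMod 2) sK = K.cycles p ∧
          Submodule.span (ZMod 2) (sK ∩ ↑(K.boundaries p)) = K.boundaries p ∧
          ∀ x ∈ sL, x ∈ K.boundaries p ∨ (x ∈ sK ∧ x ∉ K.boundaries p))  := by
  constructor
  · intro 𝕜 _ X _ _ _ W1 W2 hW s hs hspan
    exact basis_double_extension 𝕜 X W1 W2 hW s hs hspan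
  · intro Vt _ L K hLK p s1 s2 _ hs2 _ hspan2
    classical
    set ZL := K.cyclesOf L.faces p with hZL
    set B := K.boundaries p with hB
    set Z := K.cycles p with hZ
    have hZLZ : ZL ≤ Z := inf_le_right
    have hBZ : B ≤ Z := boundaries_le_cycles K p
    -- extend s2 to a basis sL of ZL
    have hs2ZL : s2 ⊆ ↑ZL := fun x hx =>
      (inf_le_left : ZL ⊓ B ≤ ZL) (hspan2 ▸ Submodule.subset_span hx)
    set sL := hs2.extend hs2ZL with hsL_def
    have hsL_ind := hs2.linearIndependent_extend hs2ZL
    have hsL_sub : sL ⊆ ↑ZL := hs2.extend_subset hs2ZL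
    have hsL_span : Submodule.span (ZMod 2) sL = ZL :=
      le_antisymm (Submodule.span_le.2 hsL_sub)
        (fun x hx => hs2.subset_span_extend hs2ZL hx)
    -- extend s2 to a basis sB of B
    have hs2B : s2 ⊆ ↑B := fun x hx =>
      (inf_le_right : ZL ⊓ B ≤ B) (hspan2 ▸ Submodule.subset_span hx)
    set sB := hs2.extend hs2B with hsB_def
    have hsB_ind := hs2.linearIndependent_extend hs2B
    have hsB_sub : sB ⊆ ↑B := hs2.extend_subset hs2B
    have hsB_span : Submodule.span (ZMod 2) sB = B :=
      le_antisymm (Submodule.span_le.2 hsB_sub)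
        (fun x hx => hs2.subset_span_extend hs2B hx)
    have hs2sB : s2 ⊆ sB := hs2.subset_extend hs2B
    -- sL ∪ (sB \ s2) is linearly independent
    have hdisj : Disjoint (Submodule.span (ZMod 2) sL)
        (Submodule.span (ZMod 2) (sB \ s2)) := by
      rw [Submodule.disjoint_def]
      intro x hx1 hx2
      have hxZLB : x ∈ Submodule.span (ZMod 2) s2 := by
        rw [hspan2]
        refine ⟨hsL_span ▸ hx1, ?_⟩
        exact hsB_span ▸ Submodule.span_mono Set.diff_subset hx2
      have himg1 : Subtype.val '' {y : sB | (y : K.Chain p) ∈ s2} = s2 := by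
        ext z
        constructor
        · rintro ⟨⟨z, hz⟩, hz2, rfl⟩; exact hz2
        · intro hz; exact ⟨⟨z, hs2sB hz⟩, hz, rfl⟩
      have himg2 : Subtype.val '' {y : sB | (y : K.Chain p) ∉ s2} = sB \ s2 := by
        ext z
        constructor
        · rintro ⟨⟨z, hz⟩, hz2, rfl⟩; exact ⟨hz, hz2⟩
        · rintro ⟨hz1, hz2⟩; exact ⟨⟨z, hz1⟩, hz2, rfl⟩
      have hd : Disjoint {y : sB | (y : K.Chain p) ∈ s2}
          {y : sB | (y : K.Chain p) ∉ s2} := by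
        rw [Set.disjoint_iff]
        rintro y ⟨h1, h2⟩
        exact absurd h1 h2
      have := hsB_ind.disjoint_span_image hd
      rw [himg1, himg2] at this
      exact Submodule.disjoint_def.1 this x hxZLB hx2
    have hsU_ind : LinearIndependent (ZMod 2)
        ((↑) : ↥(sL ∪ (sB \ s2)) → K.Chain p) :=
      hsL_ind.union ((hsB_ind.mono Set.diff_subset)) hdisj
    have hUnion : sL ∪ (sB \ s2) = sL ∪ sB := by
      apply Set.Subset.antisymm
      · exact Set.union_subset_union_right _ Set.diff_subset
      · intro x hx
        rcases hx with hx | hx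
        · exact Or.inl hx
        · by_cases h : x ∈ s2
          · exact Or.inl (hs2.subset_extend hs2ZL h)
          · exact Or.inr ⟨hx, h⟩
    rw [hUnion] at hsU_ind
    -- extend sL ∪ sB to a basis sK of Z
    have hsUZ : sL ∪ sB ⊆ ↑Z := by
      rintro x (hx | hx)
      · exact hZLZ (hsL_sub hx)
      · exact hBZ (hsB_sub hx)
    set sK := hsU_ind.extend hsUZ with hsK_def
    have hsK_ind := hsU_ind.linearIndependent_extend hsUZ
    have hsK_sub : sK ⊆ ↑Z := hsU_ind.extend_subset hsUZ
    have hsK_span : Submodule.span (ZMod 2) sK = Z :=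
      le_antisymm (Submodule.span_le.2 hsK_sub)
        (fun x hx => hsU_ind.subset_span_extend hsUZ hx)
    have hsUsK : sL ∪ sB ⊆ sK := hsU_ind.subset_extend hsUZ
    have hsLsK : sL ⊆ sK := (Set.subset_union_left).trans hsUsK
    have hsBsK : sB ⊆ sK := (Set.subset_union_right).trans hsUsK
    refine ⟨sL, sK, hs2.subset_extend hs2ZL, hsLsK, hsK_ind, hsL_span, hsK_span,
      ?_, ?_⟩
    · refine le_antisymm (Submodule.span_le.2 Set.inter_subset_right) ?_
      conv_lhs => rw [← hsB_span]
      exact Submodule.span_mono (Set.subset_inter hsBsK hsB_sub)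
    · intro x hx
      by_cases h : x ∈ B
      · exact Or.inl h
      · exact Or.inr ⟨hsLsK hx, h⟩
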